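/- Let θ_i : ℝ_{≥0} → ℝ_{≥0} be strictly increasing, onto, with θ_i(0) = 0 and ∫₀¹ |ln θ_i(s)| ds < ∞, and let ρ_i = ln θ_i. For fixed x̄ ∈ ℝ^m_{>0}, define V(x) = Σ_{i=1}^m ∫_{x̄_i}^{x_i} (ρ_i(s) − ρ_i(x̄_i)) ds on ℝ^m_{>0}. Then V(x) ≥ 0 with equality iff x = x̄, V extends continuously to ℝ^m_{≥0}, and ∂V/∂x_i(x) = ρ_i(x_i) − ρ_i(x̄_i) → −∞ as x_i → 0⁺. -/

import Mathlib

open MeasureTheory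

section lyapAux
open Set Filter

section aux
variable {θ : ℝ → ℝ} {xb : ℝ}

lemma lyap_pos (hmono : StrictMonoOn θ (Set.Ici 0)) (h0 : θ 0 = 0)
    {s : ℝ} (hs : 0 < s) : 0 < θ s := by
  have := hmono Set.self_mem_Ici (Set.mem_Ici.2 hs.le) hs
  simpa [h0] using this

variable (hmono : StrictMonoOn θ (Set.Ici 0))
    (hsurj : θ '' Set.Ici 0 = Set.Ici 0) (h0 : θ 0 = 0)
    (hint : IntegrableOn (fun s => |Real.log (θ s)|) (Set.Ioc (0 : ℝ) 1))

include hmono hsurj h0 in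
lemma lyap_contAt {a : ℝ} (ha : 0 < a) : ContinuousAt θ a := by
  apply hmono.continuousAt_of_image_mem_nhds
  · exact Filter.mem_of_superset (Ioi_mem_nhds ha) Set.Ioi_subset_Ici_self
  · rw [hsurj]
    exact Filter.mem_of_superset (Ioi_mem_nhds (lyap_pos hmono h0 ha))
      Set.Ioi_subset_Ici_self

include hmono hsurj h0 in
lemma lyap_logcont :
    ContinuousOn (fun s => Real.log (θ s)) (Set.Ioi 0) := fun a ha =>
  ((Real.continuousAt_log (ne_of_gt (lyap_pos hmono h0 ha))).comp
    (lyap_contAt hmono hsurj h0 ha)).continuousWithinAt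

include hmono hsurj h0 hint in
lemma lyap_intOn (B : ℝ) :
    IntegrableOn (fun s => Real.log (θ s)) (Set.Ioc (0:ℝ) B) := by
  have hcont := lyap_logcont hmono hsurj h0
  have h1 : IntegrableOn (fun s => Real.log (θ s)) (Set.Ioc (0:ℝ) 1) := by
    refine hint.mono' ?_ ?_
    · exact (hcont.mono Set.Ioc_subset_Ioi_self).aestronglyMeasurable measurableSet_Ioc
    · filter_upwards with a
      simp [Real.norm_eq_abs]
  have h2 : IntegrableOn (fun s => Real.log (θ s)) (Set.Ioc (1:ℝ) (max B 1)) := by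
    have hsub : Set.Icc (1:ℝ) (max B 1) ⊆ Set.Ioi 0 := fun y hy => lt_of_lt_of_le one_pos hy.1
    exact ((hcont.mono hsub).integrableOn_compact isCompact_Icc).mono_set
      Set.Ioc_subset_Icc_self
  have h3 : IntegrableOn (fun s => Real.log (θ s)) (Set.Ioc (0:ℝ) (max B 1)) := by
    rw [← Set.Ioc_union_Ioc_eq_Ioc zero_le_one (le_max_right B 1)]
    exact h1.union h2
  exact h3.mono_set (Set.Ioc_subset_Ioc_right (le_max_left B 1))

include hmono hsurj h0 hint in
lemma lyap_ii {a b : ℝ} (ha : 0 ≤ a) (hb : 0 ≤ b) :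
    IntervalIntegrable (fun s => Real.log (θ s) - Real.log (θ xb)) volume a b := by
  have h1 : IntervalIntegrable (fun s => Real.log (θ s)) volume a b := by
    rw [intervalIntegrable_iff]
    exact (lyap_intOn hmono hsurj h0 hint (max a b)).mono_set
      (Set.Ioc_subset_Ioc (le_min ha hb) le_rfl)
  exact h1.sub intervalIntegrable_const

-- strict monotonicity of log ∘ θ on positives
include hmono h0 in
lemma lyap_logmono {a b : ℝ} (ha : 0 < a) (hab : a < b) :
    Real.log (θ a) < Real.log (θ b) :=
  Real.log_lt_log (lyap_pos hmono h0 ha)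
    (hmono (Set.mem_Ici.2 ha.le) (Set.mem_Ici.2 (ha.trans hab).le) hab)

include hmono hsurj h0 hint in
lemma lyap_F_pos (hxb : 0 < xb) {t : ℝ} (ht : 0 < t) (hne : t ≠ xb) :
    0 < ∫ s in xb..t, (Real.log (θ s) - Real.log (θ xb)) := by
  set g : ℝ → ℝ := fun s => Real.log (θ s) - Real.log (θ xb) with hg
  rcases lt_or_gt_of_ne hne with hlt | hgt
  · -- t < xb
    set c := (t + xb) / 2 with hc
    have htc : t < c := by simp [hc]; linarith
    have hcx : c < xb := by simp [hc]; linarith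
    have hcpos : 0 < c := ht.trans htc
    rw [intervalIntegral.integral_symm]
    have hsplit : (∫ s in t..c, g s) + (∫ s in c..xb, g s) = ∫ s in t..xb, g s :=
      intervalIntegral.integral_add_adjacent_intervals
        (lyap_ii hmono hsurj h0 hint ht.le hcpos.le)
        (lyap_ii hmono hsurj h0 hint hcpos.le hxb.le)
    have h1 : (∫ s in t..c, g s) ≤ (c - t) • g c := by
      rw [← intervalIntegral.integral_const]
      refine intervalIntegral.integral_mono_on htc.le
        (lyap_ii hmono hsurj h0 hint ht.le hcpos.le) intervalIntegrable_const ?_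
      intro s hs
      rcases eq_or_lt_of_le hs.2 with h | h
      · simp [h]
      · have hspos : 0 < s := lt_of_lt_of_le ht hs.1
        exact le_of_lt (sub_lt_sub_right (lyap_logmono hmono h0 hspos h) _)
    have h2 : (∫ s in c..xb, g s) ≤ 0 := by
      have hle : (∫ s in c..xb, g s) ≤ ∫ _ in c..xb, (0:ℝ) := by
        refine intervalIntegral.integral_mono_on hcx.le
          (lyap_ii hmono hsurj h0 hint hcpos.le hxb.le) intervalIntegrable_const ?_
        intro s hs
        rcases eq_or_lt_of_le hs.2 with h | h
        · simp [hg, h]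
        · have hspos : 0 < s := lt_of_lt_of_le hcpos hs.1
          exact le_of_lt (sub_neg.2 (lyap_logmono hmono h0 hspos h))
      simpa using hle
    have hgc : g c < 0 := sub_neg.2 (lyap_logmono hmono h0 hcpos hcx)
    have : (∫ s in t..xb, g s) < 0 := by
      rw [← hsplit]
      have : (c - t) • g c < 0 := by
        rw [smul_eq_mul]
        exact mul_neg_of_pos_of_neg (by linarith) hgc
      linarith
    linarith
  · -- t > xb
    set c := (xb + t) / 2 with hc
    have hxc : xb < c := by simp [hc]; linarith
    have hct : c < t := by simp [hc]; linarith
    have hcpos : 0 < c := hxb.trans hxc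
    have hsplit : (∫ s in xb..c, g s) + (∫ s in c..t, g s) = ∫ s in xb..t, g s :=
      intervalIntegral.integral_add_adjacent_intervals
        (lyap_ii hmono hsurj h0 hint hxb.le hcpos.le)
        (lyap_ii hmono hsurj h0 hint hcpos.le ht.le)
    have h1 : (0:ℝ) ≤ ∫ s in xb..c, g s := by
      apply intervalIntegral.integral_nonneg hxc.le
      intro s hs
      rcases eq_or_lt_of_le hs.1 with h | h
      · simp [hg, ← h]
      · exact le_of_lt (sub_pos.2 (lyap_logmono hmono h0 hxb h))
    have h2 : (t - c) • g c ≤ ∫ s in c..t, g s := by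
      rw [← intervalIntegral.integral_const]
      refine intervalIntegral.integral_mono_on hct.le intervalIntegrable_const
        (lyap_ii hmono hsurj h0 hint hcpos.le ht.le) ?_
      intro s hs
      rcases eq_or_lt_of_le hs.1 with h | h
      · simp [← h]
      · exact le_of_lt (sub_lt_sub_right (lyap_logmono hmono h0 hcpos h) _)
    have hgc : 0 < g c := sub_pos.2 (lyap_logmono hmono h0 hxb hxc)
    have : 0 < (t - c) • g c := by
      rw [smul_eq_mul]
      exact mul_pos (by linarith) hgc
    linarith

include hmono hsurj h0 hint in
lemma lyap_F_contOn (hxb : 0 < xb) :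
    ContinuousOn (fun t => ∫ s in xb..t, (Real.log (θ s) - Real.log (θ xb)))
      (Set.Ici 0) := by
  intro t ht
  set B := max t xb + 1 with hB
  have htB : t < B := by
    have := le_max_left t xb; simp [hB]; linarith
  have hxB : xb ≤ B := by
    have := le_max_right t xb; simp [hB]; linarith
  have hB0 : (0:ℝ) ≤ B := le_trans ht htB.le
  have h1 : ContinuousOn (fun b => ∫ s in xb..b, (Real.log (θ s) - Real.log (θ xb)))
      (Set.uIcc 0 B) := by
    refine intervalIntegral.continuousOn_primitive_interval'
      (lyap_ii hmono hsurj h0 hint le_rfl hB0) ?_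
    rw [Set.uIcc_of_le hB0]
    exact ⟨hxb.le, hxB⟩
  have h2 := h1 t (by rw [Set.uIcc_of_le hB0]; exact ⟨ht, htB.le⟩)
  refine h2.mono_of_mem_nhdsWithin ?_
  rw [Set.uIcc_of_le hB0]
  rw [mem_nhdsWithin]
  exact ⟨Set.Iio B, isOpen_Iio, htB, fun y hy => ⟨hy.2, hy.1.le⟩⟩

include hmono hsurj h0 hint in
lemma lyap_F_deriv (hxb : 0 ≤ xb) {t : ℝ} (ht : 0 < t) :
    HasDerivAt (fun u => ∫ s in xb..u, (Real.log (θ s) - Real.log (θ xb)))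
      (Real.log (θ t) - Real.log (θ xb)) t := by
  refine intervalIntegral.integral_hasDerivAt_right
    (lyap_ii hmono hsurj h0 hint hxb ht.le) ?_ ?_
  · exact ((lyap_logcont hmono hsurj h0).sub continuousOn_const).stronglyMeasurableAtFilter
      isOpen_Ioi _ ht
  · exact ContinuousAt.sub
      ((Real.continuousAt_log (ne_of_gt (lyap_pos hmono h0 ht))).comp
        (lyap_contAt hmono hsurj h0 ht)) continuousAt_const

include hmono hsurj h0 in
lemma lyap_tendsto :
    Filter.Tendsto (fun s => Real.log (θ s)) (nhdsWithin 0 (Set.Ioi 0)) Filter.atBot := by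
  have h1 : Filter.Tendsto θ (nhdsWithin 0 (Set.Ioi 0)) (nhds 0) := by
    rw [tendsto_order]
    constructor
    · intro b hb
      filter_upwards [self_mem_nhdsWithin] with s hs
      exact hb.trans (lyap_pos hmono h0 hs)
    · intro b hb
      have hbmem : b ∈ θ '' Set.Ici 0 := by rw [hsurj]; exact hb.le
      obtain ⟨u, hu, hub⟩ := hbmem
      have hu0 : 0 < u := by
        rcases eq_or_lt_of_le (Set.mem_Ici.1 hu) with h | h
        · exfalso; rw [← h, h0] at hub; linarith
        · exact h
      have : Set.Ioo (0:ℝ) u ∈ nhdsWithin 0 (Set.Ioi 0) := by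
        rw [mem_nhdsWithin]
        exact ⟨Set.Iio u, isOpen_Iio, hu0, fun y hy => ⟨hy.2, hy.1⟩⟩
      filter_upwards [this] with s hs
      calc θ s < θ u := hmono (Set.mem_Ici.2 hs.1.le) hu (by exact hs.2)
        _ = b := hub
  have h2 : Filter.Tendsto θ (nhdsWithin 0 (Set.Ioi 0)) (nhdsWithin 0 (Set.Ioi 0)) := by
    refine tendsto_nhdsWithin_of_tendsto_nhds_of_eventually_within _ h1 ?_
    filter_upwards [self_mem_nhdsWithin] with s hs
    exact lyap_pos hmono h0 hs
  exact Real.tendsto_log_nhdsGT_zero.comp h2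

end aux
end lyapAux


/-- The generalized Lyapunov function
`V(x) = Σ_i ∫_{x̄_i}^{x_i} (ρ_i(s) − ρ_i(x̄_i)) ds` with `ρ_i = ln θ_i`. -/
noncomputable def lyapV {m : ℕ} (θ : Fin m → ℝ → ℝ) (xbar x : Fin m → ℝ) : ℝ :=
  ∑ i, ∫ s in (xbar i)..(x i), (Real.log (θ i s) - Real.log (θ i (xbar i)))

/-- For kinetics built from functions `θ_i` that are strictly increasing on
`[0,∞)`, onto `[0,∞)`, vanish at `0`, and have `|ln θ_i|` integrable near `0`:
the Lyapunov function `V` is nonnegative on the positive orthant and vanishes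
exactly at `x̄`, extends continuously to the nonnegative orthant, its partial
derivatives are `ρ_i(x_i) − ρ_i(x̄_i)`, and these tend to `−∞` as `x_i → 0⁺`. -/
theorem generalized_lyapunov_properties
    {m : ℕ} (θ : Fin m → ℝ → ℝ)
    (hmono : ∀ i, StrictMonoOn (θ i) (Set.Ici (0 : ℝ)))
    (hsurj : ∀ i, θ i '' Set.Ici (0 : ℝ) = Set.Ici (0 : ℝ))
    (h0 : ∀ i, θ i 0 = 0)
    (hint : ∀ i, IntegrableOn (fun s => |Real.log (θ i s)|) (Set.Ioc (0 : ℝ) 1))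
    (xbar : Fin m → ℝ) (hxbar : ∀ i, 0 < xbar i) :
    (∀ x : Fin m → ℝ, (∀ i, 0 < x i) →
      0 ≤ lyapV θ xbar x ∧ (lyapV θ xbar x = 0 ↔ x = xbar)) ∧
    (∃ Vbar : (Fin m → ℝ) → ℝ,
      ContinuousOn Vbar {x | ∀ i, 0 ≤ x i} ∧
      ∀ x : Fin m → ℝ, (∀ i, 0 < x i) → Vbar x = lyapV θ xbar x) ∧
    (∀ x : Fin m → ℝ, (∀ i, 0 < x i) → ∀ i,
      HasDerivAt (fun t => lyapV θ xbar (Function.update x i t))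
        (Real.log (θ i (x i)) - Real.log (θ i (xbar i))) (x i)) ∧
    (∀ i, Filter.Tendsto
      (fun s => Real.log (θ i s) - Real.log (θ i (xbar i)))
      (nhdsWithin 0 (Set.Ioi 0)) Filter.atBot) := by
  have hFpos : ∀ i, ∀ t : ℝ, 0 < t → t ≠ xbar i →
      0 < ∫ s in (xbar i)..t, (Real.log (θ i s) - Real.log (θ i (xbar i))) :=
    fun i t ht hne => lyap_F_pos (hmono i) (hsurj i) (h0 i) (hint i) (hxbar i) ht hne
  refine ⟨?_, ?_, ?_, ?_⟩
  · -- positivity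
    intro x hx
    have hnn : ∀ i ∈ Finset.univ, (0:ℝ) ≤
        ∫ s in (xbar i)..(x i), (Real.log (θ i s) - Real.log (θ i (xbar i))) := by
      intro i _
      rcases eq_or_ne (x i) (xbar i) with h | h
      · simp [h]
      · exact (hFpos i (x i) (hx i) h).le
    constructor
    · exact Finset.sum_nonneg hnn
    · rw [lyapV, Finset.sum_eq_zero_iff_of_nonneg hnn]
      constructor
      · intro h
        funext i
        by_contra hne
        exact absurd (h i (Finset.mem_univ i)) (ne_of_gt (hFpos i (x i) (hx i) hne))
      · intro h i _
        rw [h]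
        simp
  · -- continuous extension
    refine ⟨fun x => ∑ i, ∫ s in (xbar i)..(max (x i) 0),
      (Real.log (θ i s) - Real.log (θ i (xbar i))), ?_, ?_⟩
    · apply continuousOn_finset_sum
      intro i _
      have hFc := lyap_F_contOn (hmono i) (hsurj i) (h0 i) (hint i) (hxbar i)
      have hproj : ContinuousOn (fun x : Fin m → ℝ => max (x i) 0) {x | ∀ j, 0 ≤ x j} :=
        ((continuous_apply i).max continuous_const).continuousOn
      exact hFc.comp hproj (fun x _ => Set.mem_Ici.2 (le_max_right _ _))
    · intro x hx
      rw [lyapV]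
      exact Finset.sum_congr rfl fun i _ => by rw [max_eq_left (hx i).le]
  · -- derivative
    intro x hx i
    have hC : (fun t => lyapV θ xbar (Function.update x i t)) =
        fun t => (∫ s in (xbar i)..t, (Real.log (θ i s) - Real.log (θ i (xbar i)))) +
          ∑ j ∈ Finset.univ.erase i,
            ∫ s in (xbar j)..(x j), (Real.log (θ j s) - Real.log (θ j (xbar j))) := by
      funext t
      rw [lyapV, ← Finset.add_sum_erase _ _ (Finset.mem_univ i), Function.update_self]
      congr 1
      exact Finset.sum_congr rfl fun j hj => by
        rw [Function.update_of_ne (Finset.ne_of_mem_erase hj)]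
    rw [hC]
    exact (lyap_F_deriv (hmono i) (hsurj i) (h0 i) (hint i) (hxbar i).le (hx i)).add_const _
  · -- tendsto atBot
    intro i
    have := lyap_tendsto (hmono i) (hsurj i) (h0 i)
    simpa [sub_eq_add_neg] using
      Filter.tendsto_atBot_add_const_right _ (-(Real.log (θ i (xbar i)))) this
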